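/- Let n₀ ∈ ℕ⁺, K ∈ ℕ, and n_0, n_1, …, n_K ∈ ℕ⁺ with n_0 = n₀, and set N = Σ_{k=0}^{K} n_k·1{n_k ≥ n₀}. Then: (i) P̃^{n₀,{n_k}_{k=0}^K} · P^{{n_k}_{k=0}^K, n₀} = I_{n₀}; and (ii) for every v ∈ ℝ^{Σ_{k=0}^K n_k}, ‖P̃^{n₀,{n_k}_{k=0}^K} v‖₂² ≤ (2n₀/N)·‖v‖₂² (equivalently, the squared ℓ2 operator norm of P̃^{n₀,{n_k}_{k=0}^K} is at most 2n₀/N). -/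

import Mathlib

open MeasureTheory ProbabilityTheory Finset
open scoped ENNReal NNReal

noncomputable section

/-- Ceiling division of naturals: `cdiv a b = ⌈a / b⌉` whenever `b > 0`. -/
def cdiv (a b : ℕ) : ℕ := (a + b - 1) / b

/-- The alignment operator `P^{n,m}`: for 1-based indices `I = i+1 ∈ [n]`, `J = j+1 ∈ [m]`,
the `(I,J)` entry is `1` if `⌈(J-1)n/m⌉ + 1 ≤ I ≤ ⌈Jn/m⌉` and `0` otherwise. -/
def alignP (n m : ℕ) : Matrix (Fin n) (Fin m) ℝ :=
  Matrix.of fun i j =>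
    if cdiv (j.val * n) m < i.val + 1 ∧ i.val + 1 ≤ cdiv ((j.val + 1) * n) m then 1 else 0

/-- The averaging alignment operator `P̃^{n,m}` (for `n ≤ m`): the `(I,J)` entry is
`1/(⌈Im/n⌉ - ⌈(I-1)m/n⌉)` if `⌈(I-1)m/n⌉ + 1 ≤ J ≤ ⌈Im/n⌉` and `0` otherwise. -/
def alignPt (n m : ℕ) : Matrix (Fin n) (Fin m) ℝ :=
  Matrix.of fun i j =>
    if cdiv (i.val * m) n < j.val + 1 ∧ j.val + 1 ≤ cdiv ((i.val + 1) * m) n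
    then ((cdiv ((i.val + 1) * m) n : ℝ) - (cdiv (i.val * m) n : ℝ))⁻¹ else 0

/-- Squared `ℓ₂` norm of a vector. -/
def sqNorm {n : ℕ} (v : Fin n → ℝ) : ℝ := ∑ i, (v i) ^ 2

/-- `‖Dθ‖₁ = Σ_{i=1}^{n-1} |θ_i - θ_{i+1}|`. -/
def dNorm1 {n : ℕ} (θ : Fin n → ℝ) : ℝ :=
  ∑ i : Fin (n - 1),
    |θ ⟨i.val, by have := i.isLt; omega⟩ - θ ⟨i.val + 1, by have := i.isLt; omega⟩|

/-- `‖Dθ‖₀`: the number of change points of `θ`. -/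
def dNorm0 {n : ℕ} (θ : Fin n → ℝ) : ℕ :=
  (Finset.univ.filter fun i : Fin (n - 1) =>
    θ ⟨i.val, by have := i.isLt; omega⟩ ≠ θ ⟨i.val + 1, by have := i.isLt; omega⟩).card

/-- `Z` is a mean-zero `σ`-sub-Gaussian random variable: it is measurable, has zero mean,
and its Orlicz `ψ₂`-norm is at most `σ`, the latter being expressed by the (equivalent)
condition that `E exp(Z²/t²) ≤ 2` for every `t > σ`. -/
def IsSubG {Ω : Type*} [MeasurableSpace Ω] (μ : Measure Ω) (σ : ℝ) (Z : Ω → ℝ) : Prop :=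
  Measurable Z ∧ (∫ ω, Z ω ∂μ) = 0 ∧
    ∀ t : ℝ, σ < t →
      (∫⁻ ω, ENNReal.ofReal (Real.exp ((Z ω) ^ 2 / t ^ 2)) ∂μ) ≤ 2

/-- The set of (1-based) change-point locations `S = {t ∈ [n-1] : f_t ≠ f_{t+1}}`. -/
def chgPts {n : ℕ} (f : Fin n → ℝ) : Finset ℕ :=
  (Finset.univ.filter fun i : Fin (n - 1) =>
    f ⟨i.val, by have := i.isLt; omega⟩ ≠ f ⟨i.val + 1, by have := i.isLt; omega⟩).image
    fun i => i.val + 1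

/-- The boundaries `0 = t₀ < t₁ < ⋯ < t_{s₀} < t_{s₀+1} = n` of the blocks of `f`. -/
def boundaries {n : ℕ} (f : Fin n → ℝ) : List ℕ :=
  0 :: ((chgPts f).sort (· ≤ ·) ++ [n])

/-- The block lengths `n_i^{(0)} = t_i - t_{i-1}`, `i ∈ [s₀+1]`. -/
def blockLengths {n : ℕ} (f : Fin n → ℝ) : List ℕ :=
  List.zipWith (fun b a => b - a) (boundaries f).tail (boundaries f)

/-- The minimal length condition (Assumption 1): `max_i n_i^{(0)} ≤ c_max · min_i n_i^{(0)}`. -/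
def MinimalLength {n : ℕ} (cmax : ℝ) (f : Fin n → ℝ) : Prop :=
  ∀ a ∈ blockLengths f, ∀ b ∈ blockLengths f, (a : ℝ) ≤ cmax * (b : ℝ)

/-- `r` is the `ℓ₂` operator (spectral) norm of the matrix `M`. -/
def IsOpNorm {n m : ℕ} (M : Matrix (Fin n) (Fin m) ℝ) (r : ℝ) : Prop :=
  0 ≤ r ∧ (∀ v, sqNorm (M.mulVec v) ≤ r ^ 2 * sqNorm v) ∧
    ∀ s : ℝ, 0 ≤ s → (∀ v, sqNorm (M.mulVec v) ≤ s ^ 2 * sqNorm v) → r ≤ s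

/-- The block of the coordinate `i` determined by the cut set `M ⊆ [n-1]`:
`j` is in the block of `i` iff no cut `t ∈ M` separates them. -/
def blockOf {n : ℕ} (M : Finset (Fin (n - 1))) (i : Fin n) : Finset (Fin n) :=
  Finset.univ.filter fun j => ∀ t ∈ M, (i.val ≤ t.val ↔ j.val ≤ t.val)

/-- The blockwise-averaging orthogonal projection `P^M`. -/
def blockProj {n : ℕ} (M : Finset (Fin (n - 1))) (v : Fin n → ℝ) : Fin n → ℝ :=
  fun i => (∑ j ∈ blockOf M i, v j) / (blockOf M i).card

/-- The multisource alignment operator `P^{{n_k}_{k=0}^K, n₀}` (with `n₀ = nk 0`). -/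
def alignPMulti (K : ℕ) (nk : Fin (K + 1) → ℕ) :
    Matrix (Fin (∑ k, nk k)) (Fin (nk 0)) ℝ :=
  Matrix.of fun i j =>
    if (∑ k, cdiv (j.val * nk k) (nk 0)) < i.val + 1 ∧
        i.val + 1 ≤ ∑ k, cdiv ((j.val + 1) * nk k) (nk 0) then 1 else 0

/-- The multisource averaging alignment operator `P̃^{n₀, {n_k}_{k=0}^K}` (with `n₀ = nk 0`). -/
def alignPtMulti (K : ℕ) (nk : Fin (K + 1) → ℕ) :
    Matrix (Fin (nk 0)) (Fin (∑ k, nk k)) ℝ :=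
  Matrix.of fun i j =>
    if (∑ k, cdiv (i.val * nk k) (nk 0)) < j.val + 1 ∧
        j.val + 1 ≤ ∑ k, cdiv ((i.val + 1) * nk k) (nk 0)
    then (((∑ k, cdiv ((i.val + 1) * nk k) (nk 0) : ℕ) : ℝ) -
          ((∑ k, cdiv (i.val * nk k) (nk 0) : ℕ) : ℝ))⁻¹ else 0

/-- `J̃_{j,k} = Σ_{k̃=0}^{k-1} ⌈j n_{k̃}/n₀⌉ + Σ_{k̃=k}^{K} ⌈(j-1) n_{k̃}/n₀⌉` (with `j` 1-based,
`n₀ = nk 0`). -/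
def Jt (K : ℕ) (nk : Fin (K + 1) → ℕ) (j k : ℕ) : ℕ :=
  ∑ t : Fin (K + 1),
    if t.val < k then cdiv (j * nk t) (nk 0) else cdiv ((j - 1) * nk t) (nk 0)

/-- The (1-based) positions `{⌈j n₁/n₀⌉ + j : j ∈ [n₀]}` occupied by the target data in the
interleaved vector. -/
def tpos (n₀ n₁ : ℕ) : Finset ℕ :=
  (Finset.range n₀).image fun j => cdiv ((j + 1) * n₁) n₀ + (j + 1)

/-- `mcount n₀ n₁ I = |{⌈j n₁/n₀⌉ + j : j ∈ [n₀]} ∩ [I]|`. -/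
def mcount (n₀ n₁ I : ℕ) : ℕ := ((tpos n₀ n₁).filter (· ≤ I)).card

/-- The interleaved data vector `ỹ ∈ ℝ^{n₁+n₀}`: `ỹ_I = y_j` if `I = ⌈j n₁/n₀⌉ + j` for some
`j ∈ [n₀]`, and otherwise `ỹ_I = y¹_{I - mcount n₀ n₁ I}`. -/
def interleave (n₀ n₁ : ℕ) (y : Fin n₀ → ℝ) (y1 : Fin n₁ → ℝ) : Fin (n₁ + n₀) → ℝ :=
  fun i =>
    if h : ∃ j : Fin n₀, i.val + 1 = cdiv ((j.val + 1) * n₁) n₀ + (j.val + 1) then y h.choose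
    else if h2 : i.val - mcount n₀ n₁ (i.val + 1) < n₁ then y1 ⟨_, h2⟩ else 0

end
section AuxLemmas

lemma cdiv_le_cdiv {a b : ℕ} (n : ℕ) (h : a ≤ b) : cdiv a n ≤ cdiv b n :=
  Nat.div_le_div_right (by omega)

lemma cdiv_mul_self (j n : ℕ) (hn : 0 < n) : cdiv (j * n) n = j := by
  unfold cdiv
  rw [show j * n + n - 1 = n * j + (n - 1) by rw [mul_comm]; omega, Nat.mul_add_div hn,
    Nat.div_eq_of_lt (by omega)]
  omega

lemma div_add_div_le' (x m n : ℕ) (hn : 0 < n) : x / n + m / n ≤ (x + m) / n := by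
  rw [Nat.le_div_iff_mul_le hn, add_mul]
  exact Nat.add_le_add (Nat.div_mul_le_self x n) (Nat.div_mul_le_self m n)

lemma cdiv_add_le (a m n : ℕ) (hn : 0 < n) : cdiv a n + m / n ≤ cdiv (a + m) n := by
  unfold cdiv
  calc (a + n - 1) / n + m / n ≤ (a + n - 1 + m) / n := div_add_div_le' _ _ _ hn
    _ = (a + m + n - 1) / n := by congr 1; omega

lemma cdiv_key (n m i : ℕ) (hn : 0 < n) (hm : 0 < m) :
    (if n ≤ m then m else 0) + 2 * n * cdiv (i * m) n ≤ 2 * n * cdiv ((i + 1) * m) n := by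
  split_ifs with h
  · have h1 : cdiv (i * m) n + m / n ≤ cdiv ((i + 1) * m) n := by
      have := cdiv_add_le (i * m) m n hn
      rwa [show i * m + m = (i + 1) * m by ring] at this
    have h2 : 1 ≤ m / n := (Nat.one_le_div_iff hn).mpr h
    have h3 : m ≤ 2 * n * (m / n) := by
      have h4 := Nat.div_add_mod m n
      have h5 : m % n < n := Nat.mod_lt _ hn
      nlinarith
    nlinarith
  · simp only [zero_add]
    exact Nat.mul_le_mul_left _ (cdiv_le_cdiv n (by nlinarith))

lemma card_band (N a b : ℕ) (hb : b ≤ N) :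
    (Finset.univ.filter fun l : Fin N => a < l.val + 1 ∧ l.val + 1 ≤ b).card = b - a := by
  rw [← Nat.card_Ico a b]
  apply Finset.card_nbij (fun l => l.val)
  · intro l hl
    simp only [Finset.mem_coe, Finset.mem_filter] at hl
    simp only [Finset.mem_coe, Finset.mem_Ico]
    omega
  · intro x _ y _ h
    exact Fin.val_injective h
  · intro x hx
    simp only [Finset.coe_Ico, Set.mem_Ico] at hx
    exact ⟨⟨x, by omega⟩, by simp; omega, rfl⟩

lemma ite_mul_ite_eq {p q : Prop} [Decidable p] [Decidable q] (c : ℝ) :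
    (if p then c else 0) * (if q then (1 : ℝ) else 0) = if p ∧ q then c else 0 := by
  by_cases hp : p <;> by_cases hq : q <;> simp [hp, hq]

end AuxLemmas


/-- **Lemma 9**: `P̃^{n₀,{n_k}} P^{{n_k},n₀} = I` and
`‖P̃^{n₀,{n_k}} v‖₂² ≤ (2n₀/N)‖v‖₂²` where `N = Σ_{k=0}^K n_k 1{n_k ≥ n₀}` and `n₀ = nk 0`. -/
theorem alignPtMulti_identities (n₀ K : ℕ) (hn₀ : 0 < n₀)
    (nk : Fin (K + 1) → ℕ) (hnk : ∀ k, 0 < nk k) (h0 : nk 0 = n₀) :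
    (alignPtMulti K nk * alignPMulti K nk = 1) ∧
      ∀ v : Fin (∑ k, nk k) → ℝ,
        sqNorm ((alignPtMulti K nk).mulVec v) ≤
          2 * (n₀ : ℝ) / (∑ k, if n₀ ≤ nk k then (nk k : ℝ) else 0) * sqNorm v := by
  subst h0
  -- monotonicity of S
  have Smono : ∀ a b : ℕ, a ≤ b →
      (∑ k, cdiv (a * nk k) (nk 0)) ≤ ∑ k, cdiv (b * nk k) (nk 0) :=
    fun a b h => Finset.sum_le_sum fun k _ => cdiv_le_cdiv (nk 0) (Nat.mul_le_mul_right _ h)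
  have Ssucc : ∀ j : ℕ, (∑ k, cdiv (j * nk k) (nk 0)) < ∑ k, cdiv ((j + 1) * nk k) (nk 0) := by
    intro j
    have e : ∀ m : ℕ, (∑ k, cdiv (m * nk k) (nk 0)) =
        m + ∑ k : Fin K, cdiv (m * nk k.succ) (nk 0) := by
      intro m
      rw [Fin.sum_univ_succ, cdiv_mul_self m (nk 0) hn₀]
    rw [e j, e (j + 1)]
    have : (∑ k : Fin K, cdiv (j * nk k.succ) (nk 0)) ≤ ∑ k : Fin K, cdiv ((j + 1) * nk k.succ) (nk 0) :=
      Finset.sum_le_sum fun k _ => cdiv_le_cdiv (nk 0) (Nat.mul_le_mul_right _ (by omega))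
    omega
  have Stop : (∑ k, cdiv ((nk 0) * nk k) (nk 0)) = ∑ k, nk k := by
    apply Finset.sum_congr rfl
    intro k _
    rw [mul_comm]; exact cdiv_mul_self (nk k) (nk 0) hn₀
  have Sle : ∀ j : ℕ, j ≤ (nk 0) → (∑ k, cdiv (j * nk k) (nk 0)) ≤ ∑ k, nk k := by
    intro j hj
    rw [← Stop]; exact Smono j (nk 0) hj
  -- blocks are disjoint across distinct i
  have hdisj : ∀ (i j : Fin (nk 0)) (l : ℕ),
      ((∑ k, cdiv (i.val * nk k) (nk 0)) < l + 1 ∧ l + 1 ≤ ∑ k, cdiv ((i.val + 1) * nk k) (nk 0)) →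
      ((∑ k, cdiv (j.val * nk k) (nk 0)) < l + 1 ∧ l + 1 ≤ ∑ k, cdiv ((j.val + 1) * nk k) (nk 0)) →
      i = j := by
    intro i j l hi hj
    by_contra hne
    rcases Nat.lt_or_ge i.val j.val with h | h
    · have := Smono (i.val + 1) j.val h
      omega
    · have hlt : j.val < i.val := by
        rcases Nat.lt_or_ge j.val i.val with h' | h'
        · exact h'
        · exact absurd (Fin.ext (le_antisymm h' h)) hne
      have := Smono (j.val + 1) i.val hlt
      omega
  have hcard : ∀ i : Fin (nk 0),
      (Finset.univ.filter fun l : Fin (∑ k, nk k) =>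
        (∑ k, cdiv (i.val * nk k) (nk 0)) < l.val + 1 ∧
          l.val + 1 ≤ ∑ k, cdiv ((i.val + 1) * nk k) (nk 0)).card =
      (∑ k, cdiv ((i.val + 1) * nk k) (nk 0)) - ∑ k, cdiv (i.val * nk k) (nk 0) :=
    fun i => card_band _ _ _ (Sle (i.val + 1) i.isLt)
  constructor
  · -- part (i)
    ext i j
    rw [Matrix.mul_apply]
    simp only [alignPtMulti, alignPMulti, Matrix.of_apply, Matrix.one_apply]
    have hterm : ∀ l : Fin (∑ k, nk k),
        (if (∑ k, cdiv (i.val * nk k) (nk 0)) < l.val + 1 ∧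
            l.val + 1 ≤ ∑ k, cdiv ((i.val + 1) * nk k) (nk 0)
          then (((∑ k, cdiv ((i.val + 1) * nk k) (nk 0) : ℕ) : ℝ) -
              ((∑ k, cdiv (i.val * nk k) (nk 0) : ℕ) : ℝ))⁻¹ else 0) *
        (if (∑ k, cdiv (j.val * nk k) (nk 0)) < l.val + 1 ∧
            l.val + 1 ≤ ∑ k, cdiv ((j.val + 1) * nk k) (nk 0) then (1 : ℝ) else 0) =
        if ((∑ k, cdiv (i.val * nk k) (nk 0)) < l.val + 1 ∧
              l.val + 1 ≤ ∑ k, cdiv ((i.val + 1) * nk k) (nk 0)) ∧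
            ((∑ k, cdiv (j.val * nk k) (nk 0)) < l.val + 1 ∧
              l.val + 1 ≤ ∑ k, cdiv ((j.val + 1) * nk k) (nk 0))
          then (((∑ k, cdiv ((i.val + 1) * nk k) (nk 0) : ℕ) : ℝ) -
              ((∑ k, cdiv (i.val * nk k) (nk 0) : ℕ) : ℝ))⁻¹ else 0 := by
      intro l
      exact ite_mul_ite_eq _
    rw [Finset.sum_congr rfl fun l _ => hterm l]
    by_cases hij : i = j
    · subst hij
      simp only [and_self, eq_self_iff_true, if_true]
      rw [Finset.sum_ite, Finset.sum_const, Finset.sum_const_zero, add_zero, nsmul_eq_mul,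
        hcard i]
      have hlt := Ssucc i.val
      have hcast : (((∑ k, cdiv ((i.val + 1) * nk k) (nk 0)) - ∑ k, cdiv (i.val * nk k) (nk 0) : ℕ) : ℝ) =
          ((∑ k, cdiv ((i.val + 1) * nk k) (nk 0) : ℕ) : ℝ) -
            ((∑ k, cdiv (i.val * nk k) (nk 0) : ℕ) : ℝ) := by
        push_cast [Nat.cast_sub (le_of_lt hlt)]; ring
      have hYX : ((∑ k, cdiv (i.val * nk k) (nk 0) : ℕ) : ℝ) <
          ((∑ k, cdiv ((i.val + 1) * nk k) (nk 0) : ℕ) : ℝ) := by exact_mod_cast hlt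
      rw [hcast]
      exact mul_inv_cancel₀ (sub_ne_zero.mpr (ne_of_gt hYX))
    · rw [if_neg hij]
      apply Finset.sum_eq_zero
      intro l _
      rw [if_neg]
      rintro ⟨h1, h2⟩
      exact hij (hdisj i j l.val h1 h2)
  · -- part (ii)
    intro v
    set Nn : ℕ := ∑ k, if (nk 0) ≤ nk k then nk k else 0 with hNn
    have hNcast : (∑ k, if ((nk 0) : ℕ) ≤ nk k then ((nk k : ℕ) : ℝ) else 0) = (Nn : ℝ) := by
      rw [hNn]
      push_cast
      apply Finset.sum_congr rfl
      intro k _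
      split_ifs <;> simp
    have hNpos : 0 < Nn := by
      have h1 : (if nk 0 ≤ nk 0 then nk 0 else 0) ≤ Nn :=
        Finset.single_le_sum (f := fun k => if nk 0 ≤ nk k then nk k else 0)
          (fun k _ => Nat.zero_le _) (Finset.mem_univ 0)
      rw [if_pos le_rfl] at h1
      omega
    have hkey : ∀ i : Fin (nk 0), Nn + 2 * (nk 0) * (∑ k, cdiv (i.val * nk k) (nk 0)) ≤
        2 * (nk 0) * ∑ k, cdiv ((i.val + 1) * nk k) (nk 0) := by
      intro i
      rw [hNn, Finset.mul_sum, Finset.mul_sum, ← Finset.sum_add_distrib]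
      exact Finset.sum_le_sum fun k _ => cdiv_key (nk 0) (nk k) i.val hn₀ (hnk k)
    rw [hNcast]
    -- abbreviations
    set c : ℝ := 2 * ((nk 0) : ℝ) / (Nn : ℝ) with hc
    have hcpos : 0 < c := by
      apply div_pos <;> positivity
    unfold sqNorm
    have hrow : ∀ i : Fin (nk 0),
        ((alignPtMulti K nk).mulVec v i) ^ 2 ≤
          c * ∑ l ∈ (Finset.univ.filter fun l : Fin (∑ k, nk k) =>
            (∑ k, cdiv (i.val * nk k) (nk 0)) < l.val + 1 ∧
              l.val + 1 ≤ ∑ k, cdiv ((i.val + 1) * nk k) (nk 0)), (v l) ^ 2 := by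
      intro i
      set B := Finset.univ.filter fun l : Fin (∑ k, nk k) =>
        (∑ k, cdiv (i.val * nk k) (nk 0)) < l.val + 1 ∧
          l.val + 1 ≤ ∑ k, cdiv ((i.val + 1) * nk k) (nk 0) with hB
      have hlt := Ssucc i.val
      set d : ℕ := (∑ k, cdiv ((i.val + 1) * nk k) (nk 0)) - ∑ k, cdiv (i.val * nk k) (nk 0) with hd
      have hdpos : 0 < d := by omega
      have hdcast : ((∑ k, cdiv ((i.val + 1) * nk k) (nk 0) : ℕ) : ℝ) -
          ((∑ k, cdiv (i.val * nk k) (nk 0) : ℕ) : ℝ) = (d : ℝ) := by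
        rw [hd]; push_cast [Nat.cast_sub (le_of_lt hlt)]; ring
      have hmv : (alignPtMulti K nk).mulVec v i = (d : ℝ)⁻¹ * ∑ l ∈ B, v l := by
        rw [Matrix.mulVec, dotProduct]
        simp only [alignPtMulti, Matrix.of_apply, hdcast]
        rw [Finset.mul_sum, hB]
        rw [Finset.sum_filter]
        apply Finset.sum_congr rfl
        intro l _
        split_ifs <;> simp
      rw [hmv]
      have hCS : (∑ l ∈ B, v l) ^ 2 ≤ (B.card : ℝ) * ∑ l ∈ B, (v l) ^ 2 :=
        sq_sum_le_card_mul_sum_sq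
      have hBcard : (B.card : ℝ) = (d : ℝ) := by
        rw [hB, hcard i, hd]
      rw [hBcard] at hCS
      have hsum_nonneg : (0:ℝ) ≤ ∑ l ∈ B, (v l) ^ 2 :=
        Finset.sum_nonneg fun l _ => sq_nonneg _
      have hdR : (0:ℝ) < (d : ℝ) := by exact_mod_cast hdpos
      have step1 : ((d : ℝ)⁻¹ * ∑ l ∈ B, v l) ^ 2 ≤ (d : ℝ)⁻¹ * ∑ l ∈ B, (v l) ^ 2 := by
        rw [mul_pow]
        calc ((d:ℝ)⁻¹) ^ 2 * (∑ l ∈ B, v l) ^ 2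
            ≤ ((d:ℝ)⁻¹) ^ 2 * ((d:ℝ) * ∑ l ∈ B, (v l) ^ 2) := by
              apply mul_le_mul_of_nonneg_left hCS (by positivity)
          _ = (d : ℝ)⁻¹ * ∑ l ∈ B, (v l) ^ 2 := by
              field_simp
      have hdc : (d : ℝ)⁻¹ ≤ c := by
        rw [hc, inv_eq_one_div, div_le_div_iff₀ hdR (by exact_mod_cast hNpos)]
        have : (Nn : ℝ) ≤ 2 * ((nk 0) : ℝ) * (d : ℝ) := by
          have h2 := hkey i
          have h3 : 2 * nk 0 * d + 2 * nk 0 * (∑ k, cdiv (i.val * nk k) (nk 0)) =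
              2 * nk 0 * (∑ k, cdiv ((i.val + 1) * nk k) (nk 0)) := by
            rw [hd, ← Nat.mul_add, Nat.sub_add_cancel (le_of_lt hlt)]
          have : Nn ≤ 2 * (nk 0) * d := by linarith
          exact_mod_cast this
        linarith
      calc ((d : ℝ)⁻¹ * ∑ l ∈ B, v l) ^ 2 ≤ (d : ℝ)⁻¹ * ∑ l ∈ B, (v l) ^ 2 := step1
        _ ≤ c * ∑ l ∈ B, (v l) ^ 2 := mul_le_mul_of_nonneg_right hdc hsum_nonneg
    calc (∑ i : Fin (nk 0), ((alignPtMulti K nk).mulVec v i) ^ 2)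
        ≤ ∑ i : Fin (nk 0), c * ∑ l ∈ (Finset.univ.filter fun l : Fin (∑ k, nk k) =>
            (∑ k, cdiv (i.val * nk k) (nk 0)) < l.val + 1 ∧
              l.val + 1 ≤ ∑ k, cdiv ((i.val + 1) * nk k) (nk 0)), (v l) ^ 2 :=
          Finset.sum_le_sum fun i _ => hrow i
      _ = c * ∑ i : Fin (nk 0), ∑ l ∈ (Finset.univ.filter fun l : Fin (∑ k, nk k) =>
            (∑ k, cdiv (i.val * nk k) (nk 0)) < l.val + 1 ∧
              l.val + 1 ≤ ∑ k, cdiv ((i.val + 1) * nk k) (nk 0)), (v l) ^ 2 := by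
          rw [Finset.mul_sum]
      _ ≤ c * ∑ l : Fin (∑ k, nk k), (v l) ^ 2 := by
          apply mul_le_mul_of_nonneg_left _ (le_of_lt hcpos)
          rw [← Finset.sum_biUnion]
          · apply Finset.sum_le_sum_of_subset_of_nonneg (Finset.subset_univ _)
            intro l _ _
            exact sq_nonneg _
          · intro i _ j _ hij
            simp only [Function.onFun]
            rw [Finset.disjoint_left]
            intro l hl1 hl2
            simp only [Finset.mem_filter] at hl1 hl2
            exact hij (hdisj i j l.val hl1.2 hl2.2)
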